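/- Let f be a union-intersection expression, h a function, H = f(h(S_1),...,h(S_m)), and define S'_i = {x ∈ S_i : h(x) ∈ H}. Then f(S'_1,...,S'_m) = f(S_1,...,S_m). -/
import Mathlib


/-- A union-intersection expression tree on `m` input sets: leaves are input
sets, internal nodes are binary union or intersection operations. -/
inductive Expr (m : ℕ) where
  | leaf : Fin m → Expr m
  | union : Expr m → Expr m → Expr m
  | inter : Expr m → Expr m → Expr m

/-- Bottom-up evaluation of an expression on sets `S : Fin m → Set U`. -/
def Expr.eval {m : ℕ} {U : Type*} (S : Fin m → Set U) : Expr m → Set U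
  | .leaf i => S i
  | .union a b => a.eval S ∪ b.eval S
  | .inter a b => a.eval S ∩ b.eval S
theorem Expr.eval_mono {m : ℕ} {U : Type*} {S S' : Fin m → Set U}
    (hs : ∀ i, S i ⊆ S' i) (e : Expr m) : e.eval S ⊆ e.eval S' := by
  induction e with
  | leaf i => exact hs i
  | union a b ha hb => exact Set.union_subset_union ha hb
  | inter a b ha hb => exact Set.inter_subset_inter ha hb

theorem Expr.mem_eval_image {m : ℕ} {U V : Type*} (h : U → V) (S : Fin m → Set U)
    (e : Expr m) {x : U} (hx : x ∈ e.eval S) : h x ∈ e.eval (fun j => h '' S j) := by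
  induction e with
  | leaf i => exact ⟨x, hx, rfl⟩
  | union a b ha hb => cases hx with
    | inl hx => exact Or.inl (ha hx)
    | inr hx => exact Or.inr (hb hx)
  | inter a b ha hb => exact ⟨ha hx.1, hb hx.2⟩

theorem Expr.inter_subset_eval {m : ℕ} {U : Type*} (S : Fin m → Set U) (T : Set U)
    (e : Expr m) : e.eval S ∩ T ⊆ e.eval (fun i => S i ∩ T) := by
  induction e with
  | leaf i => exact fun x hx => hx
  | union a b ha hb =>
    rintro x ⟨hx | hx, hT⟩
    · exact Or.inl (ha ⟨hx, hT⟩)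
    · exact Or.inr (hb ⟨hx, hT⟩)
  | inter a b ha hb =>
    rintro x ⟨⟨h1, h2⟩, hT⟩
    exact ⟨ha ⟨h1, hT⟩, hb ⟨h2, hT⟩⟩

/-- Filtering each input set to the elements whose hash value lies in
`H = f(h(S₁),…,h(Sₘ))` does not change the value of the expression. -/
theorem eval_filter_eq_eval {m : ℕ} {U V : Type*} (e : Expr m) (h : U → V)
    (S : Fin m → Set U) :
    e.eval (fun i => {x ∈ S i | h x ∈ e.eval (fun j => h '' S j)}) = e.eval S := by
  apply Set.Subset.antisymm
  · exact Expr.eval_mono (fun i => Set.sep_subset _ _) e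
  · intro x hx
    exact Expr.inter_subset_eval S _ e ⟨hx, Expr.mem_eval_image h S e hx⟩
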